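/- In the two-phase consensus algorithm on a single-hop network with reliable acknowledged broadcast, if some node u sets status = decided(0) upon completing its phase-1 broadcast, then no node sets status = decided(1). Formally: if u's phase-1 broadcast completes before any node with input 1 completes its phase-1 broadcast, then every node with input 1 receives u's phase-1 message (carrying value 0) before completing phase 1, and therefore sets status = bivalent. -/

import Mathlib

/-- Two-phase consensus, phase-1 safety: `recvTime y x` is the time `y` receives
`x`'s phase-1 message, `ackTime1 x` the time `x`'s phase-1 broadcast is
acknowledged (all other nodes have received it by then), and `status y` is
`none` (bivalent) or `some b` (decided `b`, only possible if `b` is `y`'s input).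
If node `u` with input `0` (`false`) completes its phase-1 broadcast before every
node with input `1` (`true`) does—so `u` sets `status = decided(0)`—then every
node with input `1` receives `u`'s phase-1 message before its own phase-1 ack and
hence sets `status = bivalent`; in particular no node sets `status = decided(1)`. -/
theorem stmt12 {V : Type*} (input : V → Bool)
    (recvTime : V → V → ℝ) (ackTime1 : V → ℝ)
    (status : V → Option Bool) (u : V)
    -- acknowledged broadcast: everyone receives x's phase-1 message before x's ack
    (hbcast : ∀ x y : V, x ≠ y → recvTime y x < ackTime1 x)
    -- seeing the opposite input value before one's own phase-1 ack forces bivalent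
    (hstatus : ∀ y x : V, x ≠ y → input x ≠ input y →
      recvTime y x < ackTime1 y → status y = none)
    -- a decided status carries the node's own input value
    (hstatus2 : ∀ y b, status y = some b → input y = b)
    (hu : input u = false)
    (hfirst : ∀ w, input w = true → ackTime1 u < ackTime1 w) :
    (∀ y, input y = true → recvTime y u < ackTime1 y ∧ status y = none) ∧
      (∀ y, status y ≠ some true) := by
  have key : ∀ y, input y = true → recvTime y u < ackTime1 y ∧ status y = none := by
    intro y hy
    have hne : u ≠ y := by intro h; rw [h, hy] at hu; exact Bool.noConfusion hu
    have h1 : recvTime y u < ackTime1 y :=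
      lt_trans (hbcast u y hne) (hfirst y hy)
    exact ⟨h1, hstatus y u hne (by rw [hu, hy]; simp) h1⟩
  refine ⟨key, fun y hsy => ?_⟩
  have hy := hstatus2 y true hsy
  have := (key y hy).2
  rw [this] at hsy
  exact Option.some_ne_none _ hsy.symm
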